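/- The Nth roots of unity maximize the sum of pairwise distances on the circle: for every N ≥ 2 and every N points x_1, …, x_N on the unit circle S¹ ⊂ R², ∑_{j=1}^N ∑_{k=1}^N |x_j − x_k| ≤ 2N · cot(π/(2N)), with equality when the points are the Nth roots of unity; hence the maximal sum-of-distances energy E_{−1}(S¹; N) := sup over all N-point configurations on S¹ of ∑_{j≠k} |x_j − x_k| equals 2N · cot(π/(2N)). -/

import Mathlib

open MeasureTheory Metric Real Filter
open scoped BigOperators ENNReal NNReal RealInnerProductSpace Topology

noncomputable section

/-- The point `(cos θ, sin θ)` on the unit circle `S¹ ⊂ ℝ²`. -/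
def circlePoint (θ : ℝ) : EuclideanSpace ℝ (Fin (1 + 1)) :=
  WithLp.toLp 2 ![Real.cos θ, Real.sin θ]

/-- The `N`th roots of unity `x_k = (cos(2πk/N), sin(2πk/N))`, `k = 1, …, N`. -/
def rootsOfUnityConfig (N : ℕ) : Fin N → EuclideanSpace ℝ (Fin (1 + 1)) :=
  fun k => circlePoint (2 * π * ((k : ℕ) + 1) / N)

/-- The maximal sum-of-distances energy
`E_{−1}(S¹; N) = sup { ∑_{j≠k} |x_j − x_k| }` over all `N`-point configurations on the
unit circle `S¹ ⊂ ℝ²`. -/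
def maxSumDistCircle (N : ℕ) : ℝ :=
  ⨆ x : {x : Fin N → EuclideanSpace ℝ (Fin (1 + 1)) //
    ∀ k, x k ∈ sphere (0 : EuclideanSpace ℝ (Fin (1 + 1))) 1},
    ∑ j, ∑ k, if j ≠ k then dist (x.1 j) (x.1 k) else 0


lemma dist_circlePoint (a b : ℝ) :
    dist (circlePoint a) (circlePoint b) = 2 * |Real.sin ((a - b) / 2)| := by
  rw [EuclideanSpace.dist_eq]
  have hsum : ∑ i : Fin (1+1), dist (circlePoint a i) (circlePoint b i) ^ 2
      = (Real.cos a - Real.cos b)^2 + (Real.sin a - Real.sin b)^2 := by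
    rw [Fin.sum_univ_two (fun i => dist (circlePoint a i) (circlePoint b i) ^ 2)]
    simp [circlePoint, Real.dist_eq, sq_abs]
  rw [hsum]
  have key : (Real.cos a - Real.cos b)^2 + (Real.sin a - Real.sin b)^2
      = (2 * |Real.sin ((a - b) / 2)|)^2 := by
    have h1 : Real.cos (a - b) = Real.cos a * Real.cos b + Real.sin a * Real.sin b := Real.cos_sub a b
    have h2 : Real.cos (a-b) = 1 - 2 * Real.sin ((a-b)/2)^2 := by
      have c2' := Real.cos_two_mul ((a-b)/2)
      have s2 : Real.sin ((a-b)/2)^2 + Real.cos ((a-b)/2)^2 = 1 := Real.sin_sq_add_cos_sq _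
      rw [show 2*((a-b)/2) = a - b by ring] at c2'
      nlinarith
    have := Real.sin_sq_add_cos_sq a
    have := Real.sin_sq_add_cos_sq b
    rw [mul_pow, sq_abs]
    nlinarith
  rw [key, Real.sqrt_sq (by positivity)]

lemma circlePoint_mem_sphere (θ : ℝ) :
    circlePoint θ ∈ Metric.sphere (0 : EuclideanSpace ℝ (Fin (1 + 1))) 1 := by
  rw [Metric.mem_sphere, EuclideanSpace.dist_eq]
  have hsum : ∑ i : Fin (1+1), dist (circlePoint θ i) ((0 : EuclideanSpace ℝ (Fin (1+1))) i) ^ 2 = 1 := by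
    rw [Fin.sum_univ_two (fun i => dist (circlePoint θ i) ((0 : EuclideanSpace ℝ (Fin (1+1))) i) ^ 2)]
    have h0 : ((0 : EuclideanSpace ℝ (Fin (1+1))) 0 = 0) ∧ ((0 : EuclideanSpace ℝ (Fin (1+1))) 1 = 0) := ⟨rfl, rfl⟩
    simp only [circlePoint, Real.dist_eq, sq_abs, h0.1, h0.2, sub_zero]
    have : |Real.cos θ|^2 + |Real.sin θ|^2 = Real.cos θ ^2 + Real.sin θ ^2 := by
      rw [sq_abs, sq_abs]
    simp only [Matrix.cons_val_zero, Matrix.cons_val_one, Matrix.head_cons]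
    exact Real.cos_sq_add_sin_sq θ
  rw [hsum, Real.sqrt_one]

lemma circlePoint_eq_of_angle {a b : ℝ} (hc : Real.cos a = Real.cos b) (hs : Real.sin a = Real.sin b) :
    circlePoint a = circlePoint b := by
  unfold circlePoint; rw [hc, hs]

lemma exists_angle {x : EuclideanSpace ℝ (Fin (1+1))}
    (hx : x ∈ Metric.sphere (0 : EuclideanSpace ℝ (Fin (1+1))) 1) :
    ∃ θ ∈ Set.Ico (0:ℝ) (2*π), circlePoint θ = x := by
  have hnorm : (x 0)^2 + (x 1)^2 = 1 := by
    rw [Metric.mem_sphere, EuclideanSpace.dist_eq] at hx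
    have hsum : ∑ i : Fin (1+1), dist (x i) ((0 : EuclideanSpace ℝ (Fin (1+1))) i) ^ 2
        = (x 0)^2 + (x 1)^2 := by
      rw [Fin.sum_univ_two (fun i => dist (x i) ((0 : EuclideanSpace ℝ (Fin (1+1))) i) ^ 2)]
      have h0 : ((0 : EuclideanSpace ℝ (Fin (1+1))) 0 = 0) ∧ ((0 : EuclideanSpace ℝ (Fin (1+1))) 1 = 0) := ⟨rfl, rfl⟩
      simp [Real.dist_eq, sq_abs, h0.1, h0.2]
    rw [hsum] at hx
    have h2 : (0:ℝ) ≤ (x 0)^2 + (x 1)^2 := by positivity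
    nlinarith [Real.sq_sqrt h2]
  set a := x 0 with ha; set b := x 1 with hb
  have ha1 : -1 ≤ a := by nlinarith
  have ha2 : a ≤ 1 := by nlinarith
  have habs : Real.sin (Real.arccos a) = |b| := by
    rw [Real.sin_arccos]
    rw [show 1 - a^2 = b^2 by nlinarith, Real.sqrt_sq_eq_abs]
  set φ : ℝ := if 0 ≤ b then Real.arccos a else -Real.arccos a with hφ
  have hcos : Real.cos φ = a := by
    by_cases h : 0 ≤ b <;> simp [hφ, h, Real.cos_arccos ha1 ha2]
  have hsin : Real.sin φ = b := by
    by_cases h : 0 ≤ b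
    · simp [hφ, if_pos h, habs, abs_of_nonneg h]
    · simp only [hφ, if_neg h, Real.sin_neg, habs, abs_of_neg (not_le.mp h)]; ring
  have h2π : (0:ℝ) < 2*π := by positivity
  refine ⟨toIcoMod h2π 0 φ, by simpa using toIcoMod_mem_Ico' h2π φ, ?_⟩
  have hdiff : toIcoMod h2π 0 φ - φ = -(toIcoDiv h2π 0 φ) • (2*π) := toIcoMod_sub_self h2π 0 φ
  have : toIcoMod h2π 0 φ = ((φ + (-(toIcoDiv h2π 0 φ) : ℤ) * (2*π)) : ℝ) := by
    rw [zsmul_eq_mul] at hdiff; push_cast at hdiff ⊢; linarith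
  have hx' : circlePoint (toIcoMod h2π 0 φ) = circlePoint φ := by
    apply circlePoint_eq_of_angle
    · rw [this]; exact Real.cos_add_int_mul_two_pi φ _
    · rw [this]; exact Real.sin_add_int_mul_two_pi φ _
  rw [hx']
  ext i
  fin_cases i
  · exact hcos
  · exact hsin

lemma sum_sin_eq_cot (N : ℕ) (hN : 2 ≤ N) :
    ∑ m ∈ Finset.range N, Real.sin (π * m / N) = Real.cot (π / (2*N)) := by
  have hNpos : (0:ℝ) < N := by positivity
  have h4 : (4:ℝ) ≤ 2*N := by
    have : (2:ℝ) ≤ N := by exact_mod_cast hN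
    linarith
  set s : ℝ := π / (2*N) with hs
  have hspos : 0 < s := by positivity
  have hslt : s < π := by
    rw [hs, div_lt_iff₀ (by positivity)]
    nlinarith [Real.pi_pos]
  have hsin_pos : 0 < Real.sin s := Real.sin_pos_of_pos_of_lt_pi hspos hslt
  have h2Ns : 2 * N * s = π := by
    rw [hs]; field_simp
  set g : ℕ → ℝ := fun m => Real.cos ((2*(m:ℝ)-1)*s) with hg
  have key : ∀ m : ℕ, Real.sin (2*(m:ℝ)*s) * (2 * Real.sin s) = g m - g (m+1) := by
    intro m
    rw [hg]
    simp only
    push_cast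
    rw [Real.cos_sub_cos]
    have e1 : ((2*(m:ℝ)-1)*s + (2*((m:ℝ)+1)-1)*s) / 2 = 2*m*s := by ring
    have e2 : ((2*(m:ℝ)-1)*s - (2*((m:ℝ)+1)-1)*s) / 2 = -s := by ring
    rw [e1, e2, Real.sin_neg]; ring
  have tele : ∑ m ∈ Finset.range N, Real.sin (2*(m:ℝ)*s) * (2 * Real.sin s) = g 0 - g N :=
    (Finset.sum_congr rfl (fun m _ => key m)).trans (Finset.sum_range_sub' g N)
  have hval : g 0 - g N = 2 * Real.cos s := by
    rw [hg]
    simp only [Nat.cast_zero]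
    have e1 : (2*(0:ℝ)-1)*s = -s := by ring
    have e2 : (2*(N:ℝ)-1)*s = π - s := by rw [← h2Ns]; ring
    rw [e1, e2, Real.cos_neg, Real.cos_pi_sub]; ring
  have hsum : (∑ m ∈ Finset.range N, Real.sin (2*(m:ℝ)*s)) * (2 * Real.sin s) = 2 * Real.cos s := by
    rw [Finset.sum_mul, tele, hval]
  have harg : ∀ m : ℕ, π * m / N = 2*(m:ℝ)*s := by
    intro m; rw [hs]; field_simp
  calc ∑ m ∈ Finset.range N, Real.sin (π * m / N)
      = ∑ m ∈ Finset.range N, Real.sin (2*(m:ℝ)*s) := by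
        apply Finset.sum_congr rfl; intro m _; rw [harg m]
    _ = Real.cot s := by
        rw [Real.cot_eq_cos_div_sin]
        field_simp at hsum ⊢
        have e : ∑ x ∈ Finset.range N, Real.sin (2*s*(x:ℝ)) = ∑ x ∈ Finset.range N, Real.sin (2*(x:ℝ)*s) :=
          Finset.sum_congr rfl (fun x _ => by ring_nf)
        rw [e, mul_comm]; exact hsum

lemma concaveOn_sin_half : ConcaveOn ℝ (Set.Icc 0 (2*π)) (fun x => Real.sin (x/2)) := by
  have hsin := strictConcaveOn_sin_Icc.concaveOn
  refine ⟨convex_Icc _ _, ?_⟩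
  intro x hx y hy a b ha hb hab
  have hx2 : x/2 ∈ Set.Icc (0:ℝ) π := ⟨by linarith [hx.1], by linarith [hx.2]⟩
  have hy2 : y/2 ∈ Set.Icc (0:ℝ) π := ⟨by linarith [hy.1], by linarith [hy.2]⟩
  have := hsin.2 hx2 hy2 ha hb hab
  simp only [smul_eq_mul] at this ⊢
  have e : (a * x + b * y)/2 = a * (x/2) + b * (y/2) := by ring
  rw [e]; exact this

lemma jensen_sin {N : ℕ} (hN : 0 < N) (δ : Fin N → ℝ) (hδ : ∀ j, δ j ∈ Set.Icc 0 (2*π)) :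
    ∑ j, Real.sin (δ j / 2) ≤ N * Real.sin ((∑ j, δ j) / (2*N)) := by
  have hNR : (0:ℝ) < N := by exact_mod_cast hN
  have h := concaveOn_sin_half.le_map_sum (t := Finset.univ) (w := fun _ : Fin N => (N:ℝ)⁻¹)
    (p := δ) (fun i _ => by positivity)
    (by simp [Finset.card_univ]; field_simp) (fun i _ => hδ i)
  simp only [smul_eq_mul] at h
  have e1 : ∑ i : Fin N, (N:ℝ)⁻¹ * Real.sin (δ i / 2) = (N:ℝ)⁻¹ * ∑ i, Real.sin (δ i / 2) := by
    rw [Finset.mul_sum]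
  have e2 : ∑ i : Fin N, (N:ℝ)⁻¹ * δ i = (∑ i, δ i) / N := by
    rw [← Finset.mul_sum]; ring
  rw [e1, e2] at h
  have e3 : (∑ i, δ i) / (N:ℝ) / 2 = (∑ i, δ i) / (2*N) := by ring
  rw [e3] at h
  calc ∑ j, Real.sin (δ j / 2) = N * ((N:ℝ)⁻¹ * ∑ j, Real.sin (δ j / 2)) := by
        field_simp
    _ ≤ N * Real.sin ((∑ j, δ j) / (2*N)) := by
        apply mul_le_mul_of_nonneg_left h (le_of_lt hNR)

lemma double_sum_shift {N : ℕ} [NeZero N] (f : Fin N → Fin N → ℝ) :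
    ∑ j, ∑ k, f j k = ∑ m, ∑ j, f j (j + m) := by
  calc ∑ j, ∑ k, f j k = ∑ j, ∑ m, f j (j + m) := by
        apply Finset.sum_congr rfl; intro j _
        rw [← Equiv.sum_comp (Equiv.addLeft j) (f j)]
        apply Finset.sum_congr rfl; intro m _
        simp [Equiv.coe_addLeft]
    _ = ∑ m, ∑ j, f j (j + m) := Finset.sum_comm

lemma shift_sum_le {N : ℕ} (hN : 2 ≤ N) (ψ : Fin N → ℝ) (hmono : Monotone ψ)
    (hrange : ∀ j, ψ j ∈ Set.Ico 0 (2*π)) (m : Fin N) :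
    haveI : NeZero N := ⟨by omega⟩
    ∑ j, 2 * |Real.sin ((ψ (j + m) - ψ j)/2)| ≤ 2 * N * Real.sin (π * m / N) := by
  haveI : NeZero N := ⟨by omega⟩
  have hNpos : (0:ℝ) < N := by positivity
  set δ : Fin N → ℝ := fun j => ψ (j + m) - ψ j + (if N ≤ (j:ℕ) + (m:ℕ) then 2*π else 0) with hδdef
  have hval : ∀ j : Fin N, ((j + m : Fin N) : ℕ) = ((j:ℕ) + (m:ℕ)) % N := fun j => Fin.val_add j m
  have hcase : ∀ j : Fin N, (¬ N ≤ (j:ℕ) + (m:ℕ) ∧ ((j + m : Fin N) : ℕ) = (j:ℕ) + (m:ℕ))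
      ∨ (N ≤ (j:ℕ) + (m:ℕ) ∧ ((j + m : Fin N) : ℕ) = (j:ℕ) + (m:ℕ) - N) := by
    intro j
    by_cases h : N ≤ (j:ℕ) + (m:ℕ)
    · right
      refine ⟨h, ?_⟩
      rw [hval j, Nat.mod_eq_sub_mod h, Nat.mod_eq_of_lt (by omega)]
    · left
      exact ⟨h, by rw [hval j, Nat.mod_eq_of_lt (by omega)]⟩
  have hδmem : ∀ j, δ j ∈ Set.Icc 0 (2*π) := by
    intro j
    have h1 := hrange j
    have h2 := hrange (j + m)
    rcases hcase j with ⟨h, hk⟩ | ⟨h, hk⟩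
    · have hle : j ≤ j + m := by
        rw [Fin.le_def, hk]; omega
      have := hmono hle
      simp only [hδdef, if_neg h]
      constructor <;> [linarith; linarith [h1.1, h2.2]]
    · have hle : j + m ≤ j := by
        rw [Fin.le_def, hk]; omega
      have := hmono hle
      simp only [hδdef, if_pos h]
      constructor <;> [linarith [h1.2, h2.1]; linarith]
  have hδsum : ∑ j, δ j = 2 * π * m := by
    have e0 : ∑ j, δ j = (∑ j, ψ (j + m)) - (∑ j, ψ j)
        + ∑ j : Fin N, (if N ≤ (j:ℕ) + (m:ℕ) then (2*π:ℝ) else 0) := by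
      simp only [hδdef]
      rw [Finset.sum_add_distrib, Finset.sum_sub_distrib]
    have e1 : ∑ j, ψ (j + m) = ∑ j, ψ j := by
      rw [← Equiv.sum_comp (Equiv.addRight m) ψ]
      apply Finset.sum_congr rfl; intro j _
      simp [Equiv.coe_addRight]
    have e2 : ∑ j : Fin N, (if N ≤ (j:ℕ) + (m:ℕ) then (2*π:ℝ) else 0) = 2 * π * m := by
      rw [Fin.sum_univ_eq_sum_range (fun j => if N ≤ j + (m:ℕ) then (2*π:ℝ) else 0) N]
      rw [Finset.range_eq_Ico, ← Finset.sum_Ico_consecutive _ (Nat.zero_le (N - (m:ℕ))) (Nat.sub_le N (m:ℕ))]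
      have hz : ∑ j ∈ Finset.Ico 0 (N - (m:ℕ)), (if N ≤ j + (m:ℕ) then (2*π:ℝ) else 0) = 0 := by
        apply Finset.sum_eq_zero; intro j hj
        rw [Finset.mem_Ico] at hj
        rw [if_neg (by omega)]
      have hc : ∑ j ∈ Finset.Ico (N - (m:ℕ)) N, (if N ≤ j + (m:ℕ) then (2*π:ℝ) else 0)
          = (m:ℕ) * (2*π) := by
        rw [Finset.sum_congr rfl (fun j hj => ?_), Finset.sum_const, Nat.card_Ico]
        · rw [show N - (N - (m:ℕ)) = (m:ℕ) by omega, nsmul_eq_mul]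
        · rw [Finset.mem_Ico] at hj
          rw [if_pos (by omega)]
      rw [hz, hc, zero_add]
      push_cast; ring
    rw [e0, e1, sub_self, zero_add, e2]
  have hchord : ∀ j, |Real.sin ((ψ (j + m) - ψ j)/2)| = Real.sin (δ j / 2) := by
    intro j
    have h1 := hrange j
    have h2 := hrange (j + m)
    rcases hcase j with ⟨h, hk⟩ | ⟨h, hk⟩
    · have hle : j ≤ j + m := by rw [Fin.le_def, hk]; omega
      have hge := hmono hle
      simp only [hδdef, if_neg h, add_zero]
      apply abs_of_nonneg
      apply Real.sin_nonneg_of_nonneg_of_le_pi <;> [linarith; linarith [h1.1, h2.2]]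
    · have hle : j + m ≤ j := by rw [Fin.le_def, hk]; omega
      have hge := hmono hle
      simp only [hδdef, if_pos h]
      have e : (ψ (j + m) - ψ j + 2*π)/2 = (ψ (j + m) - ψ j)/2 + π := by ring
      rw [e, Real.sin_add_pi]
      apply abs_of_nonpos
      apply Real.sin_nonpos_of_nonpos_of_neg_pi_le <;> [linarith; linarith [h1.2, h2.1]]
  calc ∑ j, 2 * |Real.sin ((ψ (j + m) - ψ j)/2)| = 2 * ∑ j, Real.sin (δ j / 2) := by
        rw [Finset.mul_sum]
        exact Finset.sum_congr rfl (fun j _ => by rw [hchord j])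
    _ ≤ 2 * (N * Real.sin ((∑ j, δ j) / (2*N))) := by
        have := jensen_sin (by omega) δ hδmem
        linarith
    _ = 2 * N * Real.sin (π * m / N) := by
        rw [hδsum]
        have : 2 * π * (m:ℝ) / (2*N) = π * m / N := by field_simp
        rw [this]; ring

lemma roots_dist {N : ℕ} (hN : 2 ≤ N) (j m : Fin N) :
    haveI : NeZero N := ⟨by omega⟩
    dist (rootsOfUnityConfig N j) (rootsOfUnityConfig N (j + m)) = 2 * Real.sin (π * m / N) := by
  haveI : NeZero N := ⟨by omega⟩
  have hNpos : (0:ℝ) < N := by positivity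
  have hmN : ((m:ℕ):ℝ) ≤ (N:ℝ) := by exact_mod_cast le_of_lt m.isLt
  have hsin_nonneg : 0 ≤ Real.sin (π * m / N) := by
    apply Real.sin_nonneg_of_nonneg_of_le_pi
    · positivity
    · rw [div_le_iff₀ hNpos]
      nlinarith [Real.pi_pos]
  simp only [rootsOfUnityConfig]
  rw [dist_circlePoint]
  have hval : ((j + m : Fin N) : ℕ) = ((j:ℕ) + (m:ℕ)) % N := Fin.val_add j m
  by_cases h : N ≤ (j:ℕ) + (m:ℕ)
  · have hk : ((j + m : Fin N) : ℕ) = (j:ℕ) + (m:ℕ) - N := by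
      rw [hval, Nat.mod_eq_sub_mod h, Nat.mod_eq_of_lt (by omega)]
    have hc : (((j + m : Fin N) : ℕ) : ℝ) = (j:ℝ) + (m:ℝ) - N := by
      rw [hk]; push_cast [Nat.cast_sub h]; ring
    have e : (2 * π * ((j:ℕ) + 1) / N - 2 * π * (((j + m : Fin N):ℕ) + 1) / N) / 2
        = π - π * m / N := by
      rw [hc]; field_simp; ring
    rw [e, Real.sin_pi_sub, abs_of_nonneg hsin_nonneg]
  · have hk : ((j + m : Fin N) : ℕ) = (j:ℕ) + (m:ℕ) := by
      rw [hval, Nat.mod_eq_of_lt (by omega)]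
    have e : (2 * π * ((j:ℕ) + 1) / N - 2 * π * (((j + m : Fin N):ℕ) + 1) / N) / 2
        = -(π * m / N) := by
      rw [hk]; push_cast; field_simp; ring
    rw [e, Real.sin_neg, abs_neg, abs_of_nonneg hsin_nonneg]

/-- **The `N`th roots of unity maximize the sum of pairwise distances on the circle.**
Every `N`-point configuration on `S¹` has sum of distances at most `2N · cot(π/(2N))`,
with equality for the `N`th roots of unity; hence
`E_{−1}(S¹; N) = 2N · cot(π/(2N))`. -/
theorem roots_of_unity_maximize_sum_of_distances (N : ℕ) (hN : 2 ≤ N) :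
    (∀ x : Fin N → EuclideanSpace ℝ (Fin (1 + 1)),
        (∀ k, x k ∈ sphere (0 : EuclideanSpace ℝ (Fin (1 + 1))) 1) →
        ∑ j, ∑ k, dist (x j) (x k) ≤ 2 * N * Real.cot (π / (2 * N)))
    ∧ (∑ j : Fin N, ∑ k : Fin N,
        dist (rootsOfUnityConfig N j) (rootsOfUnityConfig N k)
          = 2 * N * Real.cot (π / (2 * N)))
    ∧ maxSumDistCircle N = 2 * N * Real.cot (π / (2 * N)) := by
  haveI : NeZero N := ⟨by omega⟩
  have hNpos : (0:ℝ) < N := by positivity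
  have habs : ∀ a b : ℝ, |Real.sin ((a - b)/2)| = |Real.sin ((b - a)/2)| := by
    intro a b
    rw [show (a-b)/2 = -((b-a)/2) by ring, Real.sin_neg, abs_neg]
  -- the final sum identity
  have hfin : ∑ m : Fin N, 2 * (N:ℝ) * Real.sin (π * m / N) = 2 * N * Real.cot (π / (2 * N)) := by
    rw [← Finset.mul_sum, Fin.sum_univ_eq_sum_range (fun m => Real.sin (π * m / N)) N,
      sum_sin_eq_cot N hN]
  have part1 : ∀ x : Fin N → EuclideanSpace ℝ (Fin (1 + 1)),
      (∀ k, x k ∈ sphere (0 : EuclideanSpace ℝ (Fin (1 + 1))) 1) →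
      ∑ j, ∑ k, dist (x j) (x k) ≤ 2 * N * Real.cot (π / (2 * N)) := by
    intro x hx
    choose θ hθmem hθeq using fun k => exists_angle (hx k)
    set σ := Tuple.sort θ with hσ
    set ψ : Fin N → ℝ := θ ∘ σ with hψ
    have hmono : Monotone ψ := Tuple.monotone_sort θ
    have hrange : ∀ j, ψ j ∈ Set.Ico 0 (2*π) := fun j => hθmem (σ j)
    have step1 : ∑ j, ∑ k, dist (x j) (x k)
        = ∑ j, ∑ k, 2 * |Real.sin ((ψ j - ψ k)/2)| := by
      have e1 : ∑ j, ∑ k, dist (x j) (x k)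
          = ∑ j, ∑ k, 2 * |Real.sin ((θ j - θ k)/2)| := by
        apply Finset.sum_congr rfl; intro j _
        apply Finset.sum_congr rfl; intro k _
        rw [← hθeq j, ← hθeq k, dist_circlePoint]
      rw [e1]
      rw [← Equiv.sum_comp σ (fun j => ∑ k, 2 * |Real.sin ((θ j - θ k)/2)|)]
      apply Finset.sum_congr rfl; intro j _
      rw [← Equiv.sum_comp σ (fun k => 2 * |Real.sin ((θ (σ j) - θ k)/2)|)]
      rfl
    rw [step1, double_sum_shift (fun j k => 2 * |Real.sin ((ψ j - ψ k)/2)|)]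
    calc ∑ m : Fin N, ∑ j, 2 * |Real.sin ((ψ j - ψ (j + m))/2)|
        ≤ ∑ m : Fin N, 2 * (N:ℝ) * Real.sin (π * m / N) := by
          apply Finset.sum_le_sum
          intro m _
          have := shift_sum_le hN ψ hmono hrange m
          calc ∑ j, 2 * |Real.sin ((ψ j - ψ (j + m))/2)|
              = ∑ j, 2 * |Real.sin ((ψ (j + m) - ψ j)/2)| := by
                apply Finset.sum_congr rfl; intro j _; rw [habs]
            _ ≤ 2 * N * Real.sin (π * m / N) := this
      _ = 2 * N * Real.cot (π / (2 * N)) := hfin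
  have part2 : ∑ j : Fin N, ∑ k : Fin N,
      dist (rootsOfUnityConfig N j) (rootsOfUnityConfig N k)
        = 2 * N * Real.cot (π / (2 * N)) := by
    rw [double_sum_shift (fun j k => dist (rootsOfUnityConfig N j) (rootsOfUnityConfig N k))]
    rw [← hfin]
    apply Finset.sum_congr rfl; intro m _
    rw [Finset.sum_congr rfl (fun j _ => roots_dist hN j m), Finset.sum_const,
      Finset.card_univ, Fintype.card_fin, nsmul_eq_mul]
    ring
  refine ⟨part1, part2, ?_⟩
  have hite : ∀ x : {x : Fin N → EuclideanSpace ℝ (Fin (1 + 1)) //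
      ∀ k, x k ∈ sphere (0 : EuclideanSpace ℝ (Fin (1 + 1))) 1},
      (∑ j, ∑ k, if j ≠ k then dist (x.1 j) (x.1 k) else 0)
        = ∑ j, ∑ k, dist (x.1 j) (x.1 k) := by
    intro x
    apply Finset.sum_congr rfl; intro j _
    apply Finset.sum_congr rfl; intro k _
    by_cases h : j = k
    · subst h; simp
    · rw [if_pos h]
  have hbdd : BddAbove (Set.range (fun x : {x : Fin N → EuclideanSpace ℝ (Fin (1 + 1)) //
      ∀ k, x k ∈ sphere (0 : EuclideanSpace ℝ (Fin (1 + 1))) 1} =>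
      ∑ j, ∑ k, if j ≠ k then dist (x.1 j) (x.1 k) else 0)) := by
    refine ⟨2 * N * Real.cot (π / (2 * N)), ?_⟩
    rintro _ ⟨y, rfl⟩
    calc (∑ j, ∑ k, if j ≠ k then dist (y.1 j) (y.1 k) else 0)
        = ∑ j, ∑ k, dist (y.1 j) (y.1 k) := hite y
      _ ≤ 2 * N * Real.cot (π / (2 * N)) := part1 y.1 y.2
  set xr : {x : Fin N → EuclideanSpace ℝ (Fin (1 + 1)) //
      ∀ k, x k ∈ sphere (0 : EuclideanSpace ℝ (Fin (1 + 1))) 1} :=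
    ⟨rootsOfUnityConfig N, fun k => circlePoint_mem_sphere _⟩ with hxr
  haveI : Nonempty {x : Fin N → EuclideanSpace ℝ (Fin (1 + 1)) //
      ∀ k, x k ∈ sphere (0 : EuclideanSpace ℝ (Fin (1 + 1))) 1} := ⟨xr⟩
  rw [maxSumDistCircle]
  apply le_antisymm
  · apply ciSup_le
    intro y
    calc (∑ j, ∑ k, if j ≠ k then dist (y.1 j) (y.1 k) else 0)
        = ∑ j, ∑ k, dist (y.1 j) (y.1 k) := hite y
      _ ≤ 2 * N * Real.cot (π / (2 * N)) := part1 y.1 y.2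
  · rw [← part2]
    calc ∑ j, ∑ k, dist (rootsOfUnityConfig N j) (rootsOfUnityConfig N k)
        = ∑ j, ∑ k, if j ≠ k then dist (xr.1 j) (xr.1 k) else 0 := (hite xr).symm
      _ ≤ _ := le_ciSup hbdd xr
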